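/- Let λ₀ ∉ {0, 1/2, 1} and let Δ = S^{ij}∂_i∂_j + T^i∂_i + R be a second-order operator on densities of weight λ₀ over R^m (S symmetric). Then there exists a unique self-adjoint second-order operator Δ̂ on the algebra of densities with Δ̂(1) = 0 and Δ̂|_{λ̂=λ₀} = Δ; it is given by Δ̂ = S^{ij}∂_i∂_j + ∂_jS^{ji}∂_i + (2λ̂-1)γ^i∂_i + λ̂∂_iγ^i + λ̂(λ̂-1)θ with γ^i = (T^i - ∂_jS^{ji})/(2λ₀-1) and θ = (R - λ₀(∂_iT^i - ∂_i∂_jS^{ij})/(2λ₀-1))/(λ₀(λ₀-1)). -/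

import Mathlib

/-- Partial derivative of a function on `ℝ^m` in the `i`-th coordinate direction. -/
noncomputable def pd {m : ℕ} (i : Fin m) (f : (Fin m → ℝ) → ℝ) : (Fin m → ℝ) → ℝ :=
  fun x => fderiv ℝ f x (Pi.single i 1)

/-- A second-order operator `Δ̂ = S^{ij}∂_i∂_j + λ̂ B^i∂_i + λ̂²C + D^i∂_i + λ̂E + F` on the
algebra of densities, encoded by its coefficients. -/
structure SOp (m : ℕ) where
  S : Fin m → Fin m → (Fin m → ℝ) → ℝ
  B : Fin m → (Fin m → ℝ) → ℝ
  C : (Fin m → ℝ) → ℝ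
  D : Fin m → (Fin m → ℝ) → ℝ
  E : (Fin m → ℝ) → ℝ
  F : (Fin m → ℝ) → ℝ

/-- The adjoint of a second-order operator on the algebra of densities, computed from the
rules `(∂_i)* = -∂_i`, `λ̂* = 1-λ̂`, `f* = f` (star is an anti-homomorphism). -/
noncomputable def SOp.adj {m : ℕ} (t : SOp m) : SOp m where
  S := t.S
  B := t.B
  C := t.C
  D := fun i x => (2 * ∑ j, pd j (t.S j i) x) - t.B i x - t.D i x
  E := fun x => (∑ i, pd i (t.B i) x) - 2 * t.C x - t.E x
  F := fun x => (∑ i, ∑ j, pd i (pd j (t.S i j)) x) - (∑ i, pd i (t.B i) x) + t.C x -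
    (∑ i, pd i (t.D i) x) + t.E x + t.F x


lemma contDiff_pd {m : ℕ} {f : (Fin m → ℝ) → ℝ} (hf : ContDiff ℝ (⊤ : ℕ∞) f) (i : Fin m) :
    ContDiff ℝ (⊤ : ℕ∞) (pd i f) :=
  (hf.fderiv_right (by simp)).clm_apply contDiff_const

lemma pd_sub {m : ℕ} {f g : (Fin m → ℝ) → ℝ} {x} (hf : DifferentiableAt ℝ f x)
    (hg : DifferentiableAt ℝ g x) (i : Fin m) :
    pd i (fun y => f y - g y) x = pd i f x - pd i g x := by
  simp [pd, fderiv_fun_sub hf hg]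

lemma pd_const_mul {m : ℕ} {f : (Fin m → ℝ) → ℝ} {x} (hf : DifferentiableAt ℝ f x)
    (c : ℝ) (i : Fin m) :
    pd i (fun y => c * f y) x = c * pd i f x := by
  simp [pd, fderiv_const_mul hf]

lemma pd_div_const {m : ℕ} {f : (Fin m → ℝ) → ℝ} {x} (hf : DifferentiableAt ℝ f x)
    (c : ℝ) (i : Fin m) :
    pd i (fun y => f y / c) x = pd i f x / c := by
  simp [pd, div_eq_mul_inv, fderiv_mul_const hf, mul_comm]

lemma pd_sum {m : ℕ} {f : Fin m → (Fin m → ℝ) → ℝ} {x}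
    (hf : ∀ j, DifferentiableAt ℝ (f j) x) (i : Fin m) :
    pd i (fun y => ∑ j, f j y) x = ∑ j, pd i (f j) x := by
  simp [pd, fderiv_fun_sum (fun j _ => hf j)]

lemma SOp.ext' {m : ℕ} {t u : SOp m} (h1 : t.S = u.S) (h2 : t.B = u.B) (h3 : t.C = u.C)
    (h4 : t.D = u.D) (h5 : t.E = u.E) (h6 : t.F = u.F) : t = u := by
  cases t; cases u; simp_all

/-- For `λ₀ ∉ {0, 1/2, 1}` and a second-order operator `Δ = S^{ij}∂_i∂_j + T^i∂_i + R` on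
densities of weight `λ₀`, there is a unique self-adjoint second-order operator `Δ̂` on the
algebra of densities with `Δ̂(1) = 0` (no zeroth-order term) whose restriction to weight `λ₀`
is `Δ`; it is `S^{ij}∂_i∂_j + ∂_jS^{ji}∂_i + (2λ̂-1)γ^i∂_i + λ̂∂_iγ^i + λ̂(λ̂-1)θ` with
`γ^i = (T^i - ∂_jS^{ji})/(2λ₀-1)` and
`θ = (R - λ₀(∂_iT^i - ∂_i∂_jS^{ij})/(2λ₀-1))/(λ₀(λ₀-1))`. -/
theorem stmt_10 (m : ℕ) (lam0 : ℝ) (h0 : lam0 ≠ 0) (hhalf : lam0 ≠ 1/2) (h1 : lam0 ≠ 1)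
    (S : Fin m → Fin m → (Fin m → ℝ) → ℝ) (T : Fin m → (Fin m → ℝ) → ℝ)
    (R : (Fin m → ℝ) → ℝ) (hSsymm : ∀ i j, S i j = S j i)
    (hS : ∀ i j, ContDiff ℝ (⊤ : ℕ∞) (S i j)) (hT : ∀ i, ContDiff ℝ (⊤ : ℕ∞) (T i))
    (hR : ContDiff ℝ (⊤ : ℕ∞) R) :
    ∀ γ : Fin m → (Fin m → ℝ) → ℝ,
      (∀ i x, γ i x = (T i x - ∑ j, pd j (S j i) x) / (2 * lam0 - 1)) →
    ∀ θ : (Fin m → ℝ) → ℝ,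
      (∀ x, θ x = (R x - lam0 * ((∑ i, pd i (T i) x) - ∑ i, ∑ j, pd i (pd j (S i j)) x) /
          (2 * lam0 - 1)) / (lam0 * (lam0 - 1))) →
    ∀ Δ₀ : SOp m,
      Δ₀ = ⟨S, fun i x => 2 * γ i x, θ,
            fun i x => (∑ j, pd j (S j i) x) - γ i x,
            fun x => (∑ i, pd i (γ i) x) - θ x,
            fun _ => 0⟩ →
      -- Δ₀ is self-adjoint, normalised and restricts to Δ at weight λ₀ ...
      (Δ₀.adj = Δ₀ ∧ (∀ x, Δ₀.F x = 0) ∧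
        Δ₀.S = S ∧ (∀ i x, lam0 * Δ₀.B i x + Δ₀.D i x = T i x) ∧
        (∀ x, lam0 ^ 2 * Δ₀.C x + lam0 * Δ₀.E x + Δ₀.F x = R x)) ∧
      -- ... and it is the unique such operator.
      (∀ t : SOp m,
        (t.adj = t ∧ (∀ x, t.F x = 0) ∧
          t.S = S ∧ (∀ i x, lam0 * t.B i x + t.D i x = T i x) ∧
          (∀ x, lam0 ^ 2 * t.C x + lam0 * t.E x + t.F x = R x)) → t = Δ₀) := by
  intro γ hγ θ hθ Δ₀ hΔ₀
  have hc : (2 : ℝ) * lam0 - 1 ≠ 0 := by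
    intro h; apply hhalf; linarith
  have h1' : lam0 - 1 ≠ 0 := sub_ne_zero.mpr h1
  have dT : ∀ i, Differentiable ℝ (T i) := fun i => (hT i).differentiable (by simp)
  have dSpd : ∀ i j, Differentiable ℝ (pd j (S j i)) := by
    intro i j
    have h := contDiff_pd (hS j i) j
    exact h.differentiable (by simp)
  have hγfun : ∀ i, γ i = fun x => (T i x - ∑ j, pd j (S j i) x) / (2 * lam0 - 1) :=
    fun i => funext (hγ i)
  have dγ : ∀ i, Differentiable ℝ (γ i) := by
    intro i
    rw [hγfun i]
    have hd : Differentiable ℝ (fun y => ∑ j, pd j (S j i) y) :=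
      Differentiable.fun_sum fun j _ => dSpd i j
    have he : (fun x => (T i x - ∑ j, pd j (S j i) x) / (2 * lam0 - 1)) =
        fun x => (T i x - ∑ j, pd j (S j i) x) * (2 * lam0 - 1)⁻¹ := by
      funext x; rw [div_eq_mul_inv]
    rw [he]
    exact ((dT i).sub hd).mul_const _
  have hpdγ : ∀ i x, pd i (γ i) x =
      (pd i (T i) x - ∑ j, pd i (pd j (S j i)) x) / (2 * lam0 - 1) := by
    intro i x
    rw [hγfun i]
    rw [pd_div_const (((dT i x).fun_sub (DifferentiableAt.fun_sum (fun j _ => dSpd i j x)))) _ i,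
      pd_sub (dT i x) (DifferentiableAt.fun_sum (fun j _ => dSpd i j x)) i,
      pd_sum (fun j => dSpd i j x) i]
  have hsymm2 : ∀ x, (∑ i, ∑ j, pd i (pd j (S i j)) x) = ∑ i, ∑ j, pd i (pd j (S j i)) x := by
    intro x
    refine Finset.sum_congr rfl fun i _ => Finset.sum_congr rfl fun j _ => ?_
    rw [hSsymm i j]
  have hpdB : ∀ i x, pd i (fun y => 2 * γ i y) x = 2 * pd i (γ i) x := fun i x =>
    pd_const_mul (dγ i x) 2 i
  have hsum : ∀ x, (∑ i, pd i (γ i) x) =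
      ((∑ i, pd i (T i) x) - ∑ i, ∑ j, pd i (pd j (S j i)) x) / (2 * lam0 - 1) := by
    intro x
    simp only [hpdγ]
    rw [← Finset.sum_div, Finset.sum_sub_distrib]
  subst hΔ₀
  constructor
  · refine ⟨?_, fun _ => rfl, rfl, ?_, ?_⟩
    · show SOp.mk _ _ _ _ _ _ = _
      simp only [SOp.adj, SOp.mk.injEq]
      refine ⟨trivial, trivial, trivial, ?_, ?_, ?_⟩
      · funext i x
        have := hγ i x
        ring
      · funext x
        simp only [hpdB, ← Finset.mul_sum]
        ring
      · funext x
        have hD : ∀ i, pd i (fun y => (∑ j, pd j (S j i) y) - γ i y) x =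
            (∑ j, pd i (pd j (S j i)) x) - pd i (γ i) x := by
          intro i
          rw [pd_sub (DifferentiableAt.fun_sum (fun j _ => dSpd i j x)) (dγ i x) i,
            pd_sum (fun j => dSpd i j x) i]
        simp only [hpdB, ← Finset.mul_sum, hD, Finset.sum_sub_distrib, hsymm2 x]
        ring
    · intro i x
      simp only
      have hγx := hγ i x
      rw [eq_div_iff hc] at hγx
      linear_combination hγx
    · intro x
      simp only
      rw [hsum x, hθ x, ← hsymm2 x]
      field_simp
      ring
  · rintro t ⟨hadj, hF, hSeq, hBD, hCE⟩
    have hDadj := congrArg SOp.D hadj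
    have hEadj := congrArg SOp.E hadj
    simp only [SOp.adj] at hDadj hEadj
    have hB : ∀ i x, t.B i x = 2 * γ i x := by
      intro i x
      have ha := congrFun (congrFun hDadj i) x
      have hb := hBD i x
      rw [hSeq] at ha
      have hγx := hγ i x
      rw [eq_div_iff hc] at hγx
      refine mul_left_cancel₀ hc ?_
      linear_combination ha + 2 * hb - 2 * hγx
    have hD : ∀ i x, t.D i x = (∑ j, pd j (S j i) x) - γ i x := by
      intro i x
      have ha := congrFun (congrFun hDadj i) x
      rw [hSeq] at ha
      have := hB i x
      linarith
    have hBfun : ∀ i, t.B i = fun y => 2 * γ i y := fun i => funext (hB i)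
    have hE' : ∀ x, t.E x = (∑ i, pd i (γ i) x) - t.C x := by
      intro x
      have ha := congrFun hEadj x
      simp only [hBfun, hpdB, ← Finset.mul_sum] at ha
      linarith
    have hC : ∀ x, t.C x = θ x := by
      intro x
      have h2 := hCE x
      rw [hF x, add_zero] at h2
      rw [hθ x, hsymm2 x, eq_div_iff (mul_ne_zero h0 h1'), mul_div_assoc, ← hsum x]
      linear_combination h2 - lam0 * hE' x
    have hE : ∀ x, t.E x = (∑ i, pd i (γ i) x) - θ x := by
      intro x
      rw [hE' x, hC x]
    refine SOp.ext' hSeq ?_ ?_ ?_ ?_ ?_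
    · exact funext hBfun
    · exact funext hC
    · exact funext fun i => funext (hD i)
    · exact funext hE
    · exact funext hF
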